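/- The unique bounded fixed point V* of the Bellman operator T is concave as a function of (p,w) on the convex set W, and for every fixed p ∈ [0,1] the map w ↦ V*(p,w) is weakly decreasing on [m(p), M(p)]. -/

import Mathlib

noncomputable section

/-- Expected payoff of action `a` at belief `p` (= probability of state `ω₁`, encoded `true`). -/
def euP {A : Type*} (u : A → Bool → ℝ) (a : A) (p : ℝ) : ℝ :=
  (1 - p) * u a false + p * u a true

/-- The agent's best static payoff `m(p)` at belief `p`. -/
def mFun {A : Type*} [Fintype A] [Nonempty A] (u : A → Bool → ℝ) (p : ℝ) : ℝ :=
  Finset.univ.sup' Finset.univ_nonempty (fun a => euP u a p)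

/-- The agent's full-information payoff `M(p)` at belief `p`. -/
def MFun {A : Type*} [Fintype A] [Nonempty A] (u : A → Bool → ℝ) (p : ℝ) : ℝ :=
  (1 - p) * Finset.univ.sup' Finset.univ_nonempty (fun a => u a false)
    + p * Finset.univ.sup' Finset.univ_nonempty (fun a => u a true)

/-- The set `W` of pairs (belief, promised utility). -/
def Wset {A : Type*} [Fintype A] [Nonempty A] (u : A → Bool → ℝ) : Set (ℝ × ℝ) :=
  {pw | pw.1 ∈ Set.Icc (0 : ℝ) 1 ∧ mFun u pw.1 ≤ pw.2 ∧ pw.2 ≤ MFun u pw.1}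

/-- A family: for each signal a probability, a posterior belief, a promised continuation
utility, and a recommended action. -/
structure Fam (A S : Type*) where
  prob : S → ℝ
  belief : S → ℝ
  promise : S → ℝ
  act : S → A

/-- Feasibility of the family `f` at the point `pw = (p, w) ∈ W`. -/
def Feasible {A S : Type*} [Fintype A] [Nonempty A] [Fintype S]
    (u : A → Bool → ℝ) (δ : ℝ) (pw : ℝ × ℝ) (f : Fam A S) : Prop :=
  (∀ s, f.prob s ∈ Set.Icc (0 : ℝ) 1) ∧
  (∀ s, (f.belief s, f.promise s) ∈ Wset u) ∧
  (∀ s, (1 - δ) * euP u (f.act s) (f.belief s) + δ * f.promise s ≥ mFun u (f.belief s)) ∧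
  (∑ s, f.prob s * ((1 - δ) * euP u (f.act s) (f.belief s) + δ * f.promise s) ≥ pw.2) ∧
  (∑ s, f.prob s * f.belief s = pw.1) ∧
  (∑ s, f.prob s = 1)

/-- The principal's payoff from the family `f`, given continuation value function `V`. -/
def famPayoff {A S : Type*} [Fintype S] (v : A → Bool → ℝ) (δ : ℝ) (V : ℝ × ℝ → ℝ)
    (f : Fam A S) : ℝ :=
  ∑ s, f.prob s * ((1 - δ) * euP v (f.act s) (f.belief s) + δ * V (f.belief s, f.promise s))

/-- The Bellman operator `T`. -/
def bellman {A S : Type*} [Fintype A] [Nonempty A] [Fintype S]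
    (u v : A → Bool → ℝ) (δ : ℝ) (V : ℝ × ℝ → ℝ) (pw : ℝ × ℝ) : ℝ :=
  sSup {x | ∃ f : Fam A S, Feasible u δ pw f ∧ x = famPayoff v δ V f}

/-- `V` is bounded on `W`. -/
def BddOnW {A : Type*} [Fintype A] [Nonempty A] (u : A → Bool → ℝ) (V : ℝ × ℝ → ℝ) : Prop :=
  ∃ C : ℝ, ∀ pw ∈ Wset u, |V pw| ≤ C

namespace BellmanAux
set_option linter.unusedSectionVars false
set_option linter.unusedVariables false

open Finset

variable {A : Type*} [Fintype A] [Nonempty A]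

/-- Affine combination identity. -/
lemma affine_weighted {ι : Type*} (t : Finset ι) (μ q : ι → ℝ) (hμ : ∑ i ∈ t, μ i = 1)
    (c0 c1 : ℝ) :
    ∑ i ∈ t, μ i * ((1 - q i) * c0 + q i * c1)
      = (1 - ∑ i ∈ t, μ i * q i) * c0 + (∑ i ∈ t, μ i * q i) * c1 := by
  have h : ∀ i ∈ t, μ i * ((1 - q i) * c0 + q i * c1)
      = μ i * c0 - (μ i * q i) * c0 + (μ i * q i) * c1 := fun i _ => by ring
  rw [Finset.sum_congr rfl h, Finset.sum_add_distrib, Finset.sum_sub_distrib,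
    ← Finset.sum_mul, ← Finset.sum_mul, ← Finset.sum_mul, hμ]
  ring

lemma euP_weighted {ι : Type*} (u : A → Bool → ℝ) (a : A) (t : Finset ι) (μ q : ι → ℝ)
    (hμ : ∑ i ∈ t, μ i = 1) :
    euP u a (∑ i ∈ t, μ i * q i) = ∑ i ∈ t, μ i * euP u a (q i) := by
  simp only [euP]
  exact (affine_weighted t μ q hμ _ _).symm

lemma euP_le_mFun (u : A → Bool → ℝ) (a : A) (p : ℝ) : euP u a p ≤ mFun u p := by
  unfold mFun; exact Finset.le_sup' (fun a => euP u a p) (mem_univ a)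

lemma exists_argmax (u : A → Bool → ℝ) (p : ℝ) : ∃ a : A, euP u a p = mFun u p := by
  obtain ⟨a, -, h⟩ := Finset.exists_mem_eq_sup' (Finset.univ_nonempty) (fun a : A => euP u a p)
  exact ⟨a, h.symm⟩

lemma MFun_weighted {ι : Type*} (u : A → Bool → ℝ) (t : Finset ι) (μ q : ι → ℝ)
    (hμ : ∑ i ∈ t, μ i = 1) :
    MFun u (∑ i ∈ t, μ i * q i) = ∑ i ∈ t, μ i * MFun u (q i) := by
  simp only [MFun]
  exact (affine_weighted t μ q hμ _ _).symm

lemma mFun_weighted {ι : Type*} (u : A → Bool → ℝ) (t : Finset ι) (μ q : ι → ℝ)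
    (hμ0 : ∀ i ∈ t, 0 ≤ μ i) (hμ : ∑ i ∈ t, μ i = 1) :
    mFun u (∑ i ∈ t, μ i * q i) ≤ ∑ i ∈ t, μ i * mFun u (q i) := by
  apply Finset.sup'_le
  intro a _
  rw [euP_weighted u a t μ q hμ]
  exact Finset.sum_le_sum fun i hi =>
    mul_le_mul_of_nonneg_left (euP_le_mFun u a (q i)) (hμ0 i hi)

lemma mFun_le_MFun (u : A → Bool → ℝ) {p : ℝ} (hp : p ∈ Set.Icc (0:ℝ) 1) :
    mFun u p ≤ MFun u p := by
  apply Finset.sup'_le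
  intro a _
  unfold euP MFun
  have h0 : u a false ≤ Finset.univ.sup' Finset.univ_nonempty (fun a : A => u a false) :=
    Finset.le_sup' (fun a : A => u a false) (mem_univ a)
  have h1 : u a true ≤ Finset.univ.sup' Finset.univ_nonempty (fun a : A => u a true) :=
    Finset.le_sup' (fun a : A => u a true) (mem_univ a)
  have hp0 : (0:ℝ) ≤ p := hp.1
  have hp1 : (0:ℝ) ≤ 1 - p := by linarith [hp.2]
  nlinarith

lemma mFun_zero (u : A → Bool → ℝ) : mFun u 0 = MFun u 0 := by
  simp [mFun, MFun, euP]

lemma mFun_one (u : A → Bool → ℝ) : mFun u 1 = MFun u 1 := by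
  simp [mFun, MFun, euP]

/-- Barycenters of points of `W` are in `W`. -/
lemma Wset_weighted {ι : Type*} (u : A → Bool → ℝ) (t : Finset ι) (μ q r : ι → ℝ)
    (hμ0 : ∀ i ∈ t, 0 ≤ μ i) (hμ : ∑ i ∈ t, μ i = 1)
    (hmem : ∀ i ∈ t, ((q i, r i) : ℝ × ℝ) ∈ Wset u) :
    ((∑ i ∈ t, μ i * q i, ∑ i ∈ t, μ i * r i) : ℝ × ℝ) ∈ Wset u := by
  have hq01 : ∀ i ∈ t, q i ∈ Set.Icc (0:ℝ) 1 := fun i hi => (hmem i hi).1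
  refine ⟨⟨?_, ?_⟩, ?_, ?_⟩
  · exact Finset.sum_nonneg fun i hi => mul_nonneg (hμ0 i hi) (hq01 i hi).1
  · calc ∑ i ∈ t, μ i * q i ≤ ∑ i ∈ t, μ i * 1 :=
          Finset.sum_le_sum fun i hi => mul_le_mul_of_nonneg_left (hq01 i hi).2 (hμ0 i hi)
      _ = 1 := by simpa using hμ
  · calc mFun u (∑ i ∈ t, μ i * q i) ≤ ∑ i ∈ t, μ i * mFun u (q i) :=
          mFun_weighted u t μ q hμ0 hμ
      _ ≤ ∑ i ∈ t, μ i * r i :=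
          Finset.sum_le_sum fun i hi =>
            mul_le_mul_of_nonneg_left (hmem i hi).2.1 (hμ0 i hi)
  · calc ∑ i ∈ t, μ i * r i ≤ ∑ i ∈ t, μ i * MFun u (q i) :=
          Finset.sum_le_sum fun i hi =>
            mul_le_mul_of_nonneg_left (hmem i hi).2.2 (hμ0 i hi)
      _ = MFun u (∑ i ∈ t, μ i * q i) := (MFun_weighted u t μ q hμ).symm

/-- A bound for the `euP`-values of `v`. -/
def vbd (v : A → Bool → ℝ) : ℝ := ∑ a : A, (|v a false| + |v a true|)

lemma vbd_nonneg (v : A → Bool → ℝ) : 0 ≤ vbd v :=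
  Finset.sum_nonneg fun a _ => add_nonneg (abs_nonneg _) (abs_nonneg _)

lemma abs_euP_le (v : A → Bool → ℝ) (a : A) {p : ℝ} (hp : p ∈ Set.Icc (0:ℝ) 1) :
    |euP v a p| ≤ vbd v := by
  have h1 : |euP v a p| ≤ |v a false| + |v a true| := by
    unfold euP
    calc |(1 - p) * v a false + p * v a true|
        ≤ |(1 - p) * v a false| + |p * v a true| := abs_add_le _ _
      _ = (1 - p) * |v a false| + p * |v a true| := by
          rw [abs_mul, abs_mul, abs_of_nonneg (by linarith [hp.2] : (0:ℝ) ≤ 1 - p),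
            abs_of_nonneg hp.1]
      _ ≤ |v a false| + |v a true| := by
          nlinarith [abs_nonneg (v a false), abs_nonneg (v a true), hp.1, hp.2]
  calc |euP v a p| ≤ |v a false| + |v a true| := h1
    _ ≤ vbd v := Finset.single_le_sum
        (f := fun a : A => (|v a false| + |v a true|))
        (fun a _ => add_nonneg (abs_nonneg _) (abs_nonneg _)) (mem_univ a)

end BellmanAux

namespace BellmanAux
open Finset

variable {A : Type*} [Fintype A] [Nonempty A]

/-- The payoff set defining `bellman`. -/
def PS {S : Type*} [Fintype A] [Fintype S]
    (u v : A → Bool → ℝ) (δ : ℝ) (V : ℝ × ℝ → ℝ) (pw : ℝ × ℝ) : Set ℝ :=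
  {x | ∃ f : Fam A S, Feasible u δ pw f ∧ x = famPayoff v δ V f}

lemma bellman_eq {S : Type*} [Fintype S] (u v : A → Bool → ℝ) (δ : ℝ)
    (V : ℝ × ℝ → ℝ) (pw : ℝ × ℝ) :
    bellman (S := S) u v δ V pw = sSup (PS (S := S) u v δ V pw) := rfl

/-- At every point of `W` there is a feasible family (full revelation). -/
lemma feasible_exists {S : Type*} [Fintype S] [DecidableEq S]
    (u : A → Bool → ℝ) (δ : ℝ) (hS2 : 2 ≤ Fintype.card S)
    {pw : ℝ × ℝ} (hpw : pw ∈ Wset u) :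
    ∃ f : Fam A S, Feasible u δ pw f := by
  obtain ⟨s₀, s₁, hne⟩ := Fintype.exists_pair_of_one_lt_card (α := S) (by omega)
  obtain ⟨a0, ha0⟩ := exists_argmax u 0
  obtain ⟨a1, ha1⟩ := exists_argmax u 1
  obtain ⟨hp01, hmw, hwM⟩ := hpw
  set p := pw.1
  refine ⟨⟨fun s => if s = s₁ then p else if s = s₀ then 1 - p else 0,
      fun s => if s = s₁ then 1 else 0,
      fun s => if s = s₁ then mFun u 1 else mFun u 0,
      fun s => if s = s₁ then a1 else a0⟩, ?_, ?_, ?_, ?_, ?_, ?_⟩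
  · intro s
    dsimp only
    split_ifs <;> constructor <;> simp_all <;> linarith [hp01.1, hp01.2]
  · intro s
    dsimp only
    split_ifs
    · exact ⟨by norm_num, le_refl _, (mFun_one u).le⟩
    · exact ⟨by norm_num, le_refl _, (mFun_zero u).le⟩
  · intro s
    dsimp only
    split_ifs
    · rw [ha1]; nlinarith [le_refl (mFun u 1)]
    · rw [ha0]; nlinarith [le_refl (mFun u 0)]
  · dsimp only
    have hvanish : ∀ s ∈ (univ : Finset S), s ∉ ({s₀, s₁} : Finset S) →
        (if s = s₁ then p else if s = s₀ then 1 - p else 0) *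
          ((1 - δ) * euP u (if s = s₁ then a1 else a0) (if s = s₁ then (1:ℝ) else 0)
            + δ * (if s = s₁ then mFun u 1 else mFun u 0)) = 0 := by
      intro s _ hs
      simp only [Finset.mem_insert, Finset.mem_singleton] at hs
      push_neg at hs
      rw [if_neg hs.2, if_neg hs.2, if_neg hs.2, if_neg hs.1]
      ring
    rw [← Finset.sum_subset (Finset.subset_univ ({s₀, s₁} : Finset S)) hvanish,
      Finset.sum_pair hne]
    have hns : s₁ ≠ s₀ := Ne.symm hne
    simp only [if_neg hne, if_neg hns, if_pos rfl, if_true]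
    have key : (1 - p) * ((1 - δ) * mFun u 0 + δ * mFun u 0)
        + p * ((1 - δ) * mFun u 1 + δ * mFun u 1)
        = (1 - p) * MFun u 0 + p * MFun u 1 := by
      rw [mFun_zero, mFun_one]; ring
    have hM : (1 - p) * MFun u 0 + p * MFun u 1 = MFun u p := by
      simp only [MFun]; ring
    rw [ge_iff_le]
    calc pw.2 ≤ MFun u p := hwM
      _ = (1 - p) * ((1 - δ) * euP u a0 0 + δ * mFun u 0)
          + p * ((1 - δ) * euP u a1 1 + δ * mFun u 1) := by rw [ha0, ha1, key, hM]
  · dsimp only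
    have hvanish : ∀ s ∈ (univ : Finset S), s ∉ ({s₀, s₁} : Finset S) →
        (if s = s₁ then p else if s = s₀ then 1 - p else 0) *
          (if s = s₁ then (1:ℝ) else 0) = 0 := by
      intro s _ hs
      simp only [Finset.mem_insert, Finset.mem_singleton] at hs
      push_neg at hs
      rw [if_neg hs.2, if_neg hs.2, if_neg hs.1]
      ring
    rw [← Finset.sum_subset (Finset.subset_univ ({s₀, s₁} : Finset S)) hvanish,
      Finset.sum_pair hne]
    have hns : s₁ ≠ s₀ := Ne.symm hne
    simp only [if_neg hne, if_neg hns, if_pos rfl, if_true]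
    ring
  · dsimp only
    have hvanish : ∀ s ∈ (univ : Finset S), s ∉ ({s₀, s₁} : Finset S) →
        (if s = s₁ then p else if s = s₀ then 1 - p else 0) = 0 := by
      intro s _ hs
      simp only [Finset.mem_insert, Finset.mem_singleton] at hs
      push_neg at hs
      rw [if_neg hs.2, if_neg hs.1]
    rw [← Finset.sum_subset (Finset.subset_univ ({s₀, s₁} : Finset S)) hvanish,
      Finset.sum_pair hne]
    have hns : s₁ ≠ s₀ := Ne.symm hne
    simp only [if_neg hne, if_neg hns, if_pos rfl, if_true]
    ring

/-- Pointwise bound on family payoffs. -/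
lemma abs_famPayoff_le {S : Type*} [Fintype S] (u v : A → Bool → ℝ) {δ : ℝ}
    (hδ0 : 0 ≤ δ) (hδ1 : δ ≤ 1) {V : ℝ × ℝ → ℝ} {C : ℝ}
    (hC : ∀ qw ∈ Wset u, |V qw| ≤ C) {pw : ℝ × ℝ} {f : Fam A S}
    (hf : Feasible u δ pw f) :
    |famPayoff v δ V f| ≤ (1 - δ) * vbd v + δ * C := by
  obtain ⟨hprob, hW, _, _, _, hsum⟩ := hf
  unfold famPayoff
  calc |∑ s, f.prob s * ((1 - δ) * euP v (f.act s) (f.belief s)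
          + δ * V (f.belief s, f.promise s))|
      ≤ ∑ s, |f.prob s * ((1 - δ) * euP v (f.act s) (f.belief s)
          + δ * V (f.belief s, f.promise s))| := Finset.abs_sum_le_sum_abs _ _
    _ ≤ ∑ s, f.prob s * ((1 - δ) * vbd v + δ * C) := by
        apply Finset.sum_le_sum
        intro s _
        rw [abs_mul, abs_of_nonneg (hprob s).1]
        apply mul_le_mul_of_nonneg_left _ (hprob s).1
        calc |(1 - δ) * euP v (f.act s) (f.belief s) + δ * V (f.belief s, f.promise s)|
            ≤ |(1 - δ) * euP v (f.act s) (f.belief s)| + |δ * V (f.belief s, f.promise s)| :=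
              abs_add_le _ _
          _ = (1 - δ) * |euP v (f.act s) (f.belief s)| + δ * |V (f.belief s, f.promise s)| := by
              rw [abs_mul, abs_mul, abs_of_nonneg (by linarith), abs_of_nonneg hδ0]
          _ ≤ (1 - δ) * vbd v + δ * C := by
              have h1 := abs_euP_le v (f.act s) (hW s).1
              have h2 := hC _ (hW s)
              have : (0:ℝ) ≤ 1 - δ := by linarith
              nlinarith
    _ = (1 - δ) * vbd v + δ * C := by rw [← Finset.sum_mul, hsum, one_mul]

lemma PS_bddAbove {S : Type*} [Fintype S] (u v : A → Bool → ℝ) {δ : ℝ}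
    (hδ0 : 0 ≤ δ) (hδ1 : δ ≤ 1) {V : ℝ × ℝ → ℝ} {C : ℝ}
    (hC : ∀ qw ∈ Wset u, |V qw| ≤ C) (pw : ℝ × ℝ) :
    BddAbove (PS (S := S) u v δ V pw) := by
  refine ⟨(1 - δ) * vbd v + δ * C, ?_⟩
  rintro x ⟨f, hf, rfl⟩
  exact (abs_le.mp (abs_famPayoff_le u v hδ0 hδ1 hC hf)).2

lemma PS_nonempty {S : Type*} [Fintype S] (u v : A → Bool → ℝ) (δ : ℝ)
    (hS2 : 2 ≤ Fintype.card S) (V : ℝ × ℝ → ℝ) {pw : ℝ × ℝ} (hpw : pw ∈ Wset u) :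
    (PS (S := S) u v δ V pw).Nonempty := by
  classical
  obtain ⟨f, hf⟩ := feasible_exists u δ hS2 hpw
  exact ⟨famPayoff v δ V f, f, hf, rfl⟩

/-- `bellman` is bounded on `W`. -/
lemma abs_bellman_le {S : Type*} [Fintype S] (u v : A → Bool → ℝ) {δ : ℝ}
    (hδ0 : 0 ≤ δ) (hδ1 : δ ≤ 1) (hS2 : 2 ≤ Fintype.card S) {V : ℝ × ℝ → ℝ} {C : ℝ}
    (hC : ∀ qw ∈ Wset u, |V qw| ≤ C) {pw : ℝ × ℝ} (hpw : pw ∈ Wset u) :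
    |bellman (S := S) u v δ V pw| ≤ (1 - δ) * vbd v + δ * C := by
  rw [bellman_eq, abs_le]
  constructor
  · obtain ⟨x, hx⟩ := PS_nonempty (S := S) u v δ hS2 V hpw
    calc -((1 - δ) * vbd v + δ * C)
        ≤ x := by
          obtain ⟨f, hf, rfl⟩ := hx
          exact (abs_le.mp (abs_famPayoff_le u v hδ0 hδ1 hC hf)).1
      _ ≤ sSup (PS (S := S) u v δ V pw) :=
          le_csSup (PS_bddAbove u v hδ0 hδ1 hC pw) hx
  · apply csSup_le (PS_nonempty (S := S) u v δ hS2 V hpw)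
    rintro x ⟨f, hf, rfl⟩
    exact (abs_le.mp (abs_famPayoff_le u v hδ0 hδ1 hC hf)).2

end BellmanAux

namespace BellmanAux
open Finset

variable {A : Type*} [Fintype A] [Nonempty A]

lemma merge_family {ι S : Type*} [Fintype ι] [Fintype S]
    (u v : A → Bool → ℝ) {δ : ℝ} (hδ0 : 0 ≤ δ)
    (hAS : Fintype.card A ≤ Fintype.card S)
    {V : ℝ × ℝ → ℝ} (hV : ConcaveOn ℝ (Wset u) V)
    {pw : ℝ × ℝ} {f : Fam A ι} (hf : Feasible u δ pw f) :
    ∃ g : Fam A S, Feasible u δ pw g ∧ famPayoff v δ V f ≤ famPayoff v δ V g := by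
  classical
  obtain ⟨emb⟩ := Function.Embedding.nonempty_of_card_le hAS
  obtain ⟨a0, ha0⟩ := exists_argmax u 0
  obtain ⟨hprob, hWm, hIC, hPK, hBel, hSum⟩ := hf
  set t : A → Finset ι := fun a => univ.filter (fun i => f.act i = a) with ht
  set Λ : A → ℝ := fun a => ∑ i ∈ t a, f.prob i with hΛdef
  have hΛ0 : ∀ a, 0 ≤ Λ a := fun a => Finset.sum_nonneg fun i _ => (hprob i).1
  have hprob_zero : ∀ a, Λ a = 0 → ∀ i ∈ t a, f.prob i = 0 := by
    intro a h i hi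
    exact (Finset.sum_eq_zero_iff_of_nonneg (fun j _ => (hprob j).1)).mp h i hi
  have hact : ∀ a, ∀ i ∈ t a, f.act i = a := fun a i hi => (Finset.mem_filter.mp hi).2
  have hΛsum : ∑ a : A, Λ a = 1 := by
    rw [hΛdef]
    rw [show (fun a => ∑ i ∈ t a, f.prob i) = fun a => ∑ i ∈ univ.filter (fun i => f.act i = a), f.prob i from rfl]
    rw [Finset.sum_fiberwise univ f.act f.prob]
    exact hSum
  set μ : A → ι → ℝ := fun a i => f.prob i / Λ a with hμdef
  have hμ0 : ∀ a, ∀ i ∈ t a, 0 ≤ μ a i := fun a i _ => div_nonneg (hprob i).1 (hΛ0 a)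
  have hμ1 : ∀ a, Λ a ≠ 0 → ∑ i ∈ t a, μ a i = 1 := by
    intro a h
    rw [hμdef]
    simp only
    rw [← Finset.sum_div]
    exact div_self h
  set pb : A → ℝ := fun a => if Λ a = 0 then 0 else ∑ i ∈ t a, μ a i * f.belief i with hpb
  set wb : A → ℝ := fun a =>
    if Λ a = 0 then mFun u 0 else ∑ i ∈ t a, μ a i * f.promise i with hwb
  set ab : A → A := fun a => if Λ a = 0 then a0 else a with hab
  have hcancel : ∀ a, Λ a ≠ 0 → ∀ X : ι → ℝ,
      Λ a * ∑ i ∈ t a, μ a i * X i = ∑ i ∈ t a, f.prob i * X i := by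
    intro a h X
    rw [Finset.mul_sum]
    exact Finset.sum_congr rfl fun i _ => by
      show Λ a * (f.prob i / Λ a * X i) = f.prob i * X i
      field_simp
  -- membership in W
  have hWm' : ∀ a, ((pb a, wb a) : ℝ × ℝ) ∈ Wset u := by
    intro a
    by_cases h : Λ a = 0
    · simp only [hpb, hwb, if_pos h]
      exact ⟨⟨le_refl 0, zero_le_one⟩, le_refl _, (mFun_zero u).le⟩
    · simp only [hpb, hwb, if_neg h]
      exact Wset_weighted u (t a) (μ a) f.belief f.promise (hμ0 a) (hμ1 a h)
        (fun i _ => hWm i)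
  -- incentive constraint
  have hcombo : ∀ (z : A → Bool → ℝ) (a : A), Λ a ≠ 0 → ∀ Y : ι → ℝ,
      (1 - δ) * euP z (if Λ a = 0 then a0 else a) (∑ i ∈ t a, μ a i * f.belief i)
          + δ * ∑ i ∈ t a, μ a i * Y i
        = ∑ i ∈ t a, μ a i * ((1 - δ) * euP z (f.act i) (f.belief i) + δ * Y i) := by
    intro z a h Y
    rw [if_neg h, euP_weighted z a (t a) (μ a) f.belief (hμ1 a h)]
    rw [Finset.mul_sum, Finset.mul_sum, ← Finset.sum_add_distrib]
    refine Finset.sum_congr rfl fun i hi => ?_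
    rw [hact a i hi]
    ring
  have hIC' : ∀ a, (1 - δ) * euP u (ab a) (pb a) + δ * wb a ≥ mFun u (pb a) := by
    intro a
    by_cases h : Λ a = 0
    · simp only [hpb, hwb, hab, if_pos h]
      rw [ha0]; linarith
    · simp only [hpb, hwb, hab, if_neg h]
      have := hcombo u a h f.promise
      rw [if_neg h] at this
      rw [this, ge_iff_le]
      calc mFun u (∑ i ∈ t a, μ a i * f.belief i)
          ≤ ∑ i ∈ t a, μ a i * mFun u (f.belief i) :=
            mFun_weighted u (t a) (μ a) f.belief (hμ0 a) (hμ1 a h)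
        _ ≤ ∑ i ∈ t a, μ a i * ((1 - δ) * euP u (f.act i) (f.belief i) + δ * f.promise i) :=
            Finset.sum_le_sum fun i hi =>
              mul_le_mul_of_nonneg_left (hIC i) (hμ0 a i hi)
  -- group identities
  have hgroupB : ∀ a, Λ a * pb a = ∑ i ∈ t a, f.prob i * f.belief i := by
    intro a
    by_cases h : Λ a = 0
    · rw [h, zero_mul]
      exact (Finset.sum_eq_zero fun i hi => by rw [hprob_zero a h i hi, zero_mul]).symm
    · simp only [hpb, if_neg h]
      exact hcancel a h f.belief
  have hgroupK : ∀ a, Λ a * ((1 - δ) * euP u (ab a) (pb a) + δ * wb a)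
      = ∑ i ∈ t a, f.prob i * ((1 - δ) * euP u (f.act i) (f.belief i) + δ * f.promise i) := by
    intro a
    by_cases h : Λ a = 0
    · rw [h, zero_mul]
      exact (Finset.sum_eq_zero fun i hi => by rw [hprob_zero a h i hi, zero_mul]).symm
    · simp only [hpb, hwb, hab, if_neg h]
      have := hcombo u a h f.promise
      rw [if_neg h] at this
      rw [this, hcancel a h]
  -- the merged family
  set g : Fam A S := ⟨Function.extend emb Λ (fun _ => 0), Function.extend emb pb (fun _ => 0),
      Function.extend emb wb (fun _ => mFun u 0), Function.extend emb ab (fun _ => a0)⟩ with hg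
  have hginj := emb.injective
  have hext_sum : ∀ Φ : S → ℝ,
      ∑ s : S, g.prob s * Φ s = ∑ a : A, Λ a * Φ (emb a) := by
    intro Φ
    have hsub : ((univ : Finset A).image emb) ⊆ univ := Finset.subset_univ _
    have hvan : ∀ s ∈ (univ : Finset S), s ∉ (univ : Finset A).image emb →
        g.prob s * Φ s = 0 := by
      intro s _ hs
      have hno : ¬∃ a, emb a = s := by
        rintro ⟨a, ha⟩
        exact hs (Finset.mem_image.mpr ⟨a, mem_univ a, ha⟩)
      show (Function.extend emb Λ (fun _ => 0)) s * Φ s = 0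
      rw [Function.extend_apply' _ _ _ hno]
      ring
    rw [← Finset.sum_subset hsub hvan,
      Finset.sum_image (fun a _ b _ h => hginj h)]
    refine Finset.sum_congr rfl fun a _ => ?_
    show (Function.extend emb Λ (fun _ => 0)) (emb a) * Φ (emb a) = _
    rw [hginj.extend_apply]
  have hgprob : ∀ a, g.prob (emb a) = Λ a := by
    intro a
    show Function.extend (⇑emb) Λ (fun _ => 0) (emb a) = Λ a
    exact hginj.extend_apply _ _ _
  have hgbel : ∀ a, g.belief (emb a) = pb a := by
    intro a
    show Function.extend (⇑emb) pb (fun _ => 0) (emb a) = pb a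
    exact hginj.extend_apply _ _ _
  have hgprom : ∀ a, g.promise (emb a) = wb a := by
    intro a
    show Function.extend (⇑emb) wb (fun _ => mFun u 0) (emb a) = wb a
    exact hginj.extend_apply _ _ _
  have hgact : ∀ a, g.act (emb a) = ab a := by
    intro a
    show Function.extend (⇑emb) ab (fun _ => a0) (emb a) = ab a
    exact hginj.extend_apply _ _ _
  refine ⟨g, ⟨?_, ?_, ?_, ?_, ?_, ?_⟩, ?_⟩
  · -- probabilities in [0,1]
    intro s
    by_cases h : ∃ a, emb a = s
    · obtain ⟨a, rfl⟩ := h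
      rw [hgprob]
      refine ⟨hΛ0 a, ?_⟩
      calc Λ a ≤ ∑ a' : A, Λ a' := Finset.single_le_sum (fun a' _ => hΛ0 a') (mem_univ a)
        _ = 1 := hΛsum
    · show (Function.extend emb Λ (fun _ => 0)) s ∈ Set.Icc (0:ℝ) 1
      rw [Function.extend_apply' _ _ _ h]
      exact ⟨le_refl 0, zero_le_one⟩
  · -- Wset membership
    intro s
    by_cases h : ∃ a, emb a = s
    · obtain ⟨a, rfl⟩ := h
      rw [hgbel, hgprom]
      exact hWm' a
    · show ((Function.extend emb pb (fun _ => 0)) s,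
          (Function.extend emb wb (fun _ => mFun u 0)) s) ∈ Wset u
      rw [Function.extend_apply' _ _ _ h, Function.extend_apply' _ _ _ h]
      exact ⟨⟨le_refl 0, zero_le_one⟩, le_refl _, (mFun_zero u).le⟩
  · -- incentive constraint
    intro s
    by_cases h : ∃ a, emb a = s
    · obtain ⟨a, rfl⟩ := h
      rw [hgbel, hgprom, hgact]
      exact hIC' a
    · show (1 - δ) * euP u ((Function.extend emb ab (fun _ => a0)) s)
          ((Function.extend emb pb (fun _ => 0)) s)
          + δ * (Function.extend emb wb (fun _ => mFun u 0)) s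
        ≥ mFun u ((Function.extend emb pb (fun _ => 0)) s)
      rw [Function.extend_apply' _ _ _ h, Function.extend_apply' _ _ _ h,
        Function.extend_apply' _ _ _ h]
      rw [ha0]; linarith
  · -- promise keeping
    have := hext_sum (fun s => (1 - δ) * euP u (g.act s) (g.belief s) + δ * g.promise s)
    rw [this]
    have heq : ∀ a ∈ (univ : Finset A), Λ a * ((1 - δ) * euP u (g.act (emb a)) (g.belief (emb a))
        + δ * g.promise (emb a))
        = ∑ i ∈ t a, f.prob i * ((1 - δ) * euP u (f.act i) (f.belief i) + δ * f.promise i) := by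
      intro a _
      rw [hgact, hgbel, hgprom]
      exact hgroupK a
    rw [Finset.sum_congr rfl heq, Finset.sum_fiberwise univ f.act
      (fun i => f.prob i * ((1 - δ) * euP u (f.act i) (f.belief i) + δ * f.promise i))]
    exact hPK
  · -- belief consistency
    have := hext_sum (fun s => g.belief s)
    rw [this]
    have heq : ∀ a ∈ (univ : Finset A), Λ a * g.belief (emb a)
        = ∑ i ∈ t a, f.prob i * f.belief i := by
      intro a _
      rw [hgbel]
      exact hgroupB a
    rw [Finset.sum_congr rfl heq,
      Finset.sum_fiberwise univ f.act (fun i => f.prob i * f.belief i)]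
    exact hBel
  · -- probabilities sum to one
    have := hext_sum (fun _ => (1 : ℝ))
    simp only [mul_one] at this
    rw [this]
    exact hΛsum
  · -- payoff comparison
    unfold famPayoff
    have hext := hext_sum (fun s => (1 - δ) * euP v (g.act s) (g.belief s)
      + δ * V (g.belief s, g.promise s))
    rw [hext]
    rw [← Finset.sum_fiberwise univ f.act
      (fun i => f.prob i * ((1 - δ) * euP v (f.act i) (f.belief i)
        + δ * V (f.belief i, f.promise i)))]
    apply Finset.sum_le_sum
    intro a _
    rw [hgact, hgbel, hgprom]
    by_cases h : Λ a = 0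
    · rw [h, zero_mul]
      exact le_of_eq (Finset.sum_eq_zero fun i hi => by rw [hprob_zero a h i hi, zero_mul])
    · -- Jensen step
      have hjensen : ∑ i ∈ t a, μ a i * V (f.belief i, f.promise i)
          ≤ V (pb a, wb a) := by
        have hsum := hV.le_map_sum (t := t a) (w := μ a)
          (p := fun i => ((f.belief i, f.promise i) : ℝ × ℝ)) (hμ0 a) (hμ1 a h)
          (fun i _ => hWm i)
        have hpt : ∑ i ∈ t a, μ a i • ((f.belief i, f.promise i) : ℝ × ℝ)
            = (pb a, wb a) := by
          apply Prod.ext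
          · simp only [Prod.fst_sum, Prod.smul_mk, smul_eq_mul]
            simp only [hpb, if_neg h]
          · simp only [Prod.snd_sum, Prod.smul_mk, smul_eq_mul]
            simp only [hwb, if_neg h]
        rw [hpt] at hsum
        simpa only [smul_eq_mul] using hsum
      calc ∑ i ∈ t a, f.prob i * ((1 - δ) * euP v (f.act i) (f.belief i)
              + δ * V (f.belief i, f.promise i))
          = Λ a * ∑ i ∈ t a, μ a i * ((1 - δ) * euP v (f.act i) (f.belief i)
              + δ * V (f.belief i, f.promise i)) := (hcancel a h _).symm
        _ = Λ a * ((1 - δ) * euP v (ab a) (pb a)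
              + δ * ∑ i ∈ t a, μ a i * V (f.belief i, f.promise i)) := by
            congr 1
            have := hcombo v a h (fun i => V (f.belief i, f.promise i))
            rw [if_neg h] at this
            simp only [hpb, hab, if_neg h]
            rw [this]
        _ ≤ Λ a * ((1 - δ) * euP v (ab a) (pb a) + δ * V (pb a, wb a)) := by
            apply mul_le_mul_of_nonneg_left _ (hΛ0 a)
            exact add_le_add (le_refl _) (mul_le_mul_of_nonneg_left hjensen hδ0)

end BellmanAux

namespace BellmanAux
open Finset

variable {A : Type*} [Fintype A] [Nonempty A]

/-- Wset is convex. -/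
lemma Wset_convex (u : A → Bool → ℝ) : Convex ℝ (Wset u) := by
  intro x hx y hy a b ha hb hab
  have h := Wset_weighted u ({true, false} : Finset Bool)
    (fun i => if i then a else b) (fun i => if i then x.1 else y.1)
    (fun i => if i then x.2 else y.2)
    (by intro i _; by_cases h : i <;> simp [h, ha, hb])
    (by rw [Finset.sum_pair (by simp : true ≠ false)]; simpa using hab)
    (by intro i _; by_cases h : i <;> simp [h, hx, hy])
  rw [Finset.sum_pair (by simp : true ≠ false), Finset.sum_pair (by simp : true ≠ false)] at h
  simp at h
  exact h

/-- Concave combination inequality for the Bellman operator. -/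
lemma bellman_combo {S : Type*} [Fintype S]
    (u v : A → Bool → ℝ) {δ : ℝ} (hδ0 : 0 ≤ δ) (hδ1 : δ ≤ 1)
    (hS2 : 2 ≤ Fintype.card S) (hAS : Fintype.card A ≤ Fintype.card S)
    {V : ℝ × ℝ → ℝ} {C : ℝ} (hC : ∀ qw ∈ Wset u, |V qw| ≤ C)
    (hV : ConcaveOn ℝ (Wset u) V)
    {x y : ℝ × ℝ} (hx : x ∈ Wset u) (hy : y ∈ Wset u)
    {a b : ℝ} (ha : 0 ≤ a) (hb : 0 ≤ b) (hab : a + b = 1) :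
    a * bellman (S := S) u v δ V x + b * bellman (S := S) u v δ V y
      ≤ bellman (S := S) u v δ V (a • x + b • y) := by
  classical
  rcases eq_or_lt_of_le ha with ha0 | ha0
  · have hb1 : b = 1 := by linarith
    rw [← ha0, hb1]
    simp
  rcases eq_or_lt_of_le hb with hb0 | hb0
  · have ha1 : a = 1 := by linarith
    rw [← hb0, ha1]
    simp
  have hmix : a • x + b • y ∈ Wset u := Wset_convex u hx hy ha hb hab
  apply le_of_forall_pos_le_add
  intro ε hε
  -- pick near-optimal families at x and y
  have hne_x := PS_nonempty (S := S) u v δ hS2 V hx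
  have hne_y := PS_nonempty (S := S) u v δ hS2 V hy
  have hbdd_x := PS_bddAbove (S := S) u v hδ0 hδ1 hC x
  have hbdd_y := PS_bddAbove (S := S) u v hδ0 hδ1 hC y
  have hlt_x : bellman (S := S) u v δ V x - ε < sSup (PS (S := S) u v δ V x) := by
    rw [bellman_eq]; linarith
  have hlt_y : bellman (S := S) u v δ V y - ε < sSup (PS (S := S) u v δ V y) := by
    rw [bellman_eq]; linarith
  obtain ⟨P₁, hP₁mem, hP₁⟩ := exists_lt_of_lt_csSup hne_x hlt_x
  obtain ⟨P₂, hP₂mem, hP₂⟩ := exists_lt_of_lt_csSup hne_y hlt_y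
  obtain ⟨f₁, hf₁, rfl⟩ := hP₁mem
  obtain ⟨f₂, hf₂, rfl⟩ := hP₂mem
  -- the combined family over S ⊕ S
  set h : Fam A (S ⊕ S) := ⟨Sum.elim (fun s => a * f₁.prob s) (fun s => b * f₂.prob s),
    Sum.elim f₁.belief f₂.belief, Sum.elim f₁.promise f₂.promise,
    Sum.elim f₁.act f₂.act⟩ with hh
  obtain ⟨hq1, hW1, hI1, hK1, hB1, hS1⟩ := hf₁
  obtain ⟨hq2, hW2, hI2, hK2, hB2, hS2'⟩ := hf₂
  have hfeas : Feasible u δ (a • x + b • y) h := by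
    refine ⟨?_, ?_, ?_, ?_, ?_, ?_⟩
    · rintro (s | s)
      · exact ⟨mul_nonneg ha (hq1 s).1, by
          calc a * f₁.prob s ≤ a * 1 := mul_le_mul_of_nonneg_left (hq1 s).2 ha
            _ ≤ 1 := by linarith⟩
      · exact ⟨mul_nonneg hb (hq2 s).1, by
          calc b * f₂.prob s ≤ b * 1 := mul_le_mul_of_nonneg_left (hq2 s).2 hb
            _ ≤ 1 := by linarith⟩
    · rintro (s | s)
      · exact hW1 s
      · exact hW2 s
    · rintro (s | s)
      · exact hI1 s
      · exact hI2 s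
    · rw [show ∀ F : S ⊕ S → ℝ, ∑ z : S ⊕ S, F z = ∑ s : S, F (Sum.inl s) + ∑ s : S, F (Sum.inr s)
        from fun F => Fintype.sum_sum_type F]
      simp only [hh, Sum.elim_inl, Sum.elim_inr]
      have e1 : ∑ s : S, a * f₁.prob s * ((1 - δ) * euP u (f₁.act s) (f₁.belief s)
          + δ * f₁.promise s)
          = a * ∑ s : S, f₁.prob s * ((1 - δ) * euP u (f₁.act s) (f₁.belief s)
            + δ * f₁.promise s) := by
        rw [Finset.mul_sum]; exact Finset.sum_congr rfl fun s _ => by ring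
      have e2 : ∑ s : S, b * f₂.prob s * ((1 - δ) * euP u (f₂.act s) (f₂.belief s)
          + δ * f₂.promise s)
          = b * ∑ s : S, f₂.prob s * ((1 - δ) * euP u (f₂.act s) (f₂.belief s)
            + δ * f₂.promise s) := by
        rw [Finset.mul_sum]; exact Finset.sum_congr rfl fun s _ => by ring
      rw [e1, e2]
      have hsnd : (a • x + b • y).2 = a * x.2 + b * y.2 := rfl
      rw [hsnd]
      have t1 : a * x.2 ≤ a * ∑ s : S, f₁.prob s * ((1 - δ) * euP u (f₁.act s) (f₁.belief s)
          + δ * f₁.promise s) := mul_le_mul_of_nonneg_left hK1 ha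
      have t2 : b * y.2 ≤ b * ∑ s : S, f₂.prob s * ((1 - δ) * euP u (f₂.act s) (f₂.belief s)
          + δ * f₂.promise s) := mul_le_mul_of_nonneg_left hK2 hb
      exact add_le_add t1 t2
    · rw [show ∀ F : S ⊕ S → ℝ, ∑ z : S ⊕ S, F z = ∑ s : S, F (Sum.inl s) + ∑ s : S, F (Sum.inr s)
        from fun F => Fintype.sum_sum_type F]
      simp only [hh, Sum.elim_inl, Sum.elim_inr]
      have e1 : ∑ s : S, a * f₁.prob s * f₁.belief s = a * ∑ s : S, f₁.prob s * f₁.belief s := by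
        rw [Finset.mul_sum]; exact Finset.sum_congr rfl fun s _ => by ring
      have e2 : ∑ s : S, b * f₂.prob s * f₂.belief s = b * ∑ s : S, f₂.prob s * f₂.belief s := by
        rw [Finset.mul_sum]; exact Finset.sum_congr rfl fun s _ => by ring
      rw [e1, e2, hB1, hB2]
      rfl
    · rw [show ∀ F : S ⊕ S → ℝ, ∑ z : S ⊕ S, F z = ∑ s : S, F (Sum.inl s) + ∑ s : S, F (Sum.inr s)
        from fun F => Fintype.sum_sum_type F]
      simp only [hh, Sum.elim_inl, Sum.elim_inr]
      rw [← Finset.mul_sum, ← Finset.mul_sum, hS1, hS2']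
      linarith
  have hpay : famPayoff v δ V h = a * famPayoff v δ V f₁ + b * famPayoff v δ V f₂ := by
    unfold famPayoff
    rw [show ∀ F : S ⊕ S → ℝ, ∑ z : S ⊕ S, F z = ∑ s : S, F (Sum.inl s) + ∑ s : S, F (Sum.inr s)
      from fun F => Fintype.sum_sum_type F]
    simp only [hh, Sum.elim_inl, Sum.elim_inr]
    rw [Finset.mul_sum, Finset.mul_sum]
    congr 1 <;> exact Finset.sum_congr rfl fun s _ => by ring
  obtain ⟨g, hgfeas, hgpay⟩ := merge_family (S := S) u v hδ0 hAS hV hfeas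
  have hmem : famPayoff v δ V g ∈ PS (S := S) u v δ V (a • x + b • y) := ⟨g, hgfeas, rfl⟩
  have hle : famPayoff v δ V g ≤ bellman (S := S) u v δ V (a • x + b • y) := by
    rw [bellman_eq]
    exact le_csSup (PS_bddAbove (S := S) u v hδ0 hδ1 hC _) hmem
  have : a * (bellman (S := S) u v δ V x - ε) + b * (bellman (S := S) u v δ V y - ε)
      ≤ famPayoff v δ V h := by
    rw [hpay]
    exact add_le_add (mul_le_mul_of_nonneg_left hP₁.le ha) (mul_le_mul_of_nonneg_left hP₂.le hb)
  have hfinal : a * bellman (S := S) u v δ V x + b * bellman (S := S) u v δ V y - ε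
      ≤ famPayoff v δ V h := by
    have : a * (bellman (S := S) u v δ V x - ε) + b * (bellman (S := S) u v δ V y - ε)
        = a * bellman (S := S) u v δ V x + b * bellman (S := S) u v δ V y - ε := by
      rw [show a * (bellman (S := S) u v δ V x - ε) + b * (bellman (S := S) u v δ V y - ε)
        = a * bellman (S := S) u v δ V x + b * bellman (S := S) u v δ V y - (a + b) * ε by ring,
        hab, one_mul]
    linarith [this ▸ ‹a * (bellman (S := S) u v δ V x - ε) + b * (bellman (S := S) u v δ V y - ε)
      ≤ famPayoff v δ V h›]
  linarith [hgpay, hle, hfinal]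

/-- Contraction estimate for the Bellman operator. -/
lemma bellman_contract {S : Type*} [Fintype S]
    (u v : A → Bool → ℝ) {δ : ℝ} (hδ0 : 0 ≤ δ) (hδ1 : δ ≤ 1)
    (hS2 : 2 ≤ Fintype.card S)
    {V V' : ℝ × ℝ → ℝ} {C C' K : ℝ}
    (hCV : ∀ qw ∈ Wset u, |V qw| ≤ C) (hCV' : ∀ qw ∈ Wset u, |V' qw| ≤ C')
    (hK : ∀ qw ∈ Wset u, |V qw - V' qw| ≤ K)
    {pw : ℝ × ℝ} (hpw : pw ∈ Wset u) :
    |bellman (S := S) u v δ V pw - bellman (S := S) u v δ V' pw| ≤ δ * K := by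
  classical
  have key : ∀ (W₁ W₂ : ℝ × ℝ → ℝ), (∀ qw ∈ Wset u, |W₁ qw - W₂ qw| ≤ K) →
      ∀ f : Fam A S, Feasible u δ pw f →
      famPayoff v δ W₁ f ≤ famPayoff v δ W₂ f + δ * K := by
    intro W₁ W₂ hK' f hf
    obtain ⟨hq, hW, _, _, _, hsum⟩ := hf
    unfold famPayoff
    have : ∑ s, f.prob s * ((1 - δ) * euP v (f.act s) (f.belief s)
          + δ * W₁ (f.belief s, f.promise s))
        - ∑ s, f.prob s * ((1 - δ) * euP v (f.act s) (f.belief s)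
          + δ * W₂ (f.belief s, f.promise s))
        = ∑ s, f.prob s * δ * (W₁ (f.belief s, f.promise s) - W₂ (f.belief s, f.promise s)) := by
      rw [← Finset.sum_sub_distrib]
      exact Finset.sum_congr rfl fun s _ => by ring
    have hbound : ∑ s, f.prob s * δ * (W₁ (f.belief s, f.promise s)
        - W₂ (f.belief s, f.promise s)) ≤ δ * K := by
      calc ∑ s, f.prob s * δ * (W₁ (f.belief s, f.promise s) - W₂ (f.belief s, f.promise s))
          ≤ ∑ s, f.prob s * (δ * K) := by
            apply Finset.sum_le_sum
            intro s _
            rw [mul_assoc]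
            apply mul_le_mul_of_nonneg_left _ (hq s).1
            apply mul_le_mul_of_nonneg_left _ hδ0
            exact (abs_le.mp (hK' _ (hW s))).2
        _ = δ * K := by rw [← Finset.sum_mul, hsum, one_mul]
    linarith [this ▸ hbound]
  have hKsymm : ∀ qw ∈ Wset u, |V' qw - V qw| ≤ K := by
    intro qw hqw
    rw [abs_sub_comm]
    exact hK qw hqw
  rw [abs_le]
  constructor
  · rw [neg_le, neg_sub, bellman_eq, bellman_eq, sub_le_iff_le_add]
    apply csSup_le (PS_nonempty (S := S) u v δ hS2 V' hpw)
    rintro x ⟨f, hf, rfl⟩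
    calc famPayoff v δ V' f ≤ famPayoff v δ V f + δ * K := key V' V hKsymm f hf
      _ ≤ δ * K + sSup (PS (S := S) u v δ V pw) := by
          have hmem : famPayoff v δ V f ∈ PS (S := S) u v δ V pw := ⟨f, hf, rfl⟩
          have := le_csSup (PS_bddAbove (S := S) u v hδ0 hδ1 hCV pw) hmem
          linarith
  · rw [bellman_eq, bellman_eq, sub_le_iff_le_add]
    apply csSup_le (PS_nonempty (S := S) u v δ hS2 V hpw)
    rintro x ⟨f, hf, rfl⟩
    calc famPayoff v δ V f ≤ famPayoff v δ V' f + δ * K := key V V' hK f hf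
      _ ≤ δ * K + sSup (PS (S := S) u v δ V' pw) := by
          have hmem : famPayoff v δ V' f ∈ PS (S := S) u v δ V' pw := ⟨f, hf, rfl⟩
          have := le_csSup (PS_bddAbove (S := S) u v hδ0 hδ1 hCV' pw) hmem
          linarith

end BellmanAux

open BellmanAux Filter Topology

/-- the unique bounded fixed point `V*` of `T` is concave on `W` and,
for each fixed belief `p`, weakly decreasing in the promised utility `w`. -/
theorem valueFunction_concave_and_decreasing_in_w
    {A S : Type*} [Fintype A] [Nonempty A] [Fintype S]
    (u v : A → Bool → ℝ) (δ : ℝ) (astar : A)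
    (hδ : δ ∈ Set.Ioo (0 : ℝ) 1)
    (hS2 : 2 ≤ Fintype.card S) (hAS : Fintype.card A ≤ Fintype.card S)
    (hv0 : 0 < v astar false) (hv1 : 0 < v astar true)
    (hvz : ∀ a : A, a ≠ astar → v a false = 0 ∧ v a true = 0)
    (Vstar : ℝ × ℝ → ℝ) (hVb : BddOnW u Vstar)
    (hVfix : ∀ pw ∈ Wset u, bellman (S := S) u v δ Vstar pw = Vstar pw) :
    ConcaveOn ℝ (Wset u) Vstar ∧
    (∀ p : ℝ, p ∈ Set.Icc (0 : ℝ) 1 → ∀ w₁ w₂ : ℝ,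
      mFun u p ≤ w₁ → w₁ ≤ w₂ → w₂ ≤ MFun u p → Vstar (p, w₂) ≤ Vstar (p, w₁)) := by
  classical
  obtain ⟨hδ0, hδ1⟩ := hδ
  obtain ⟨C, hC⟩ := hVb
  constructor
  · -- concavity via iterates of the Bellman operator
    set Vn : ℕ → (ℝ × ℝ → ℝ) := fun n => (bellman (S := S) u v δ)^[n] (fun _ => 0) with hVn
    have hVn_succ : ∀ n, Vn (n + 1) = bellman (S := S) u v δ (Vn n) := fun n =>
      Function.iterate_succ_apply' _ n _
    have hVn0 : ∀ qw, Vn 0 qw = 0 := fun qw => rfl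
    have hprops : ∀ n, (∀ qw ∈ Wset u, |Vn n qw| ≤ vbd v) ∧ ConcaveOn ℝ (Wset u) (Vn n) := by
      intro n
      induction n with
      | zero =>
        refine ⟨fun qw _ => by rw [hVn0 qw]; simpa using vbd_nonneg v,
          ⟨Wset_convex u, ?_⟩⟩
        intro x hx y hy a b ha hb hab
        rw [hVn0, hVn0, hVn0]
        simp
      | succ n ih =>
        obtain ⟨hbd, hconc⟩ := ih
        constructor
        · intro qw hqw
          rw [hVn_succ]
          calc |bellman (S := S) u v δ (Vn n) qw| ≤ (1 - δ) * vbd v + δ * vbd v :=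
                abs_bellman_le u v hδ0.le hδ1.le hS2 hbd hqw
            _ = vbd v := by ring
        · refine ⟨Wset_convex u, ?_⟩
          intro x hx y hy a b ha hb hab
          rw [hVn_succ]
          simp only [smul_eq_mul]
          exact bellman_combo u v hδ0.le hδ1.le hS2 hAS hbd hconc hx hy ha hb hab
    have hdist : ∀ n, ∀ qw ∈ Wset u, |Vstar qw - Vn n qw| ≤ (C + vbd v) * δ ^ n := by
      intro n
      induction n with
      | zero =>
        intro qw hqw
        rw [hVn0 qw, pow_zero, mul_one, sub_zero]
        linarith [hC qw hqw, vbd_nonneg v]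
      | succ n ih =>
        intro qw hqw
        rw [← hVfix qw hqw, hVn_succ]
        calc |bellman (S := S) u v δ Vstar qw - bellman (S := S) u v δ (Vn n) qw|
            ≤ δ * ((C + vbd v) * δ ^ n) :=
              bellman_contract u v hδ0.le hδ1.le hS2 hC (hprops n).1 ih hqw
          _ = (C + vbd v) * δ ^ (n + 1) := by ring
    have htend : ∀ qw ∈ Wset u,
        Filter.Tendsto (fun n => Vn n qw) atTop (nhds (Vstar qw)) := by
      intro qw hqw
      have h0 : Filter.Tendsto (fun n => (C + vbd v) * δ ^ n) atTop (nhds 0) := by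
        have := tendsto_pow_atTop_nhds_zero_of_lt_one hδ0.le hδ1
        simpa using this.const_mul (C + vbd v)
      have hz : Filter.Tendsto (fun n => Vn n qw - Vstar qw) atTop (nhds 0) :=
        squeeze_zero_norm (fun n => by
          rw [Real.norm_eq_abs, abs_sub_comm]; exact hdist n qw hqw) h0
      have := hz.add_const (Vstar qw)
      simpa using this
    refine ⟨Wset_convex u, ?_⟩
    intro x hx y hy a b ha hb hab
    have hmix : a • x + b • y ∈ Wset u := Wset_convex u hx hy ha hb hab
    have hn : ∀ n, a * Vn n x + b * Vn n y ≤ Vn n (a • x + b • y) := by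
      intro n
      have := (hprops n).2.2 hx hy ha hb hab
      simpa [smul_eq_mul] using this
    have hlhs : Filter.Tendsto (fun n => a * Vn n x + b * Vn n y) atTop
        (nhds (a * Vstar x + b * Vstar y)) :=
      ((htend x hx).const_mul a).add ((htend y hy).const_mul b)
    simp only [smul_eq_mul]
    exact le_of_tendsto_of_tendsto' hlhs (htend _ hmix) hn
  · -- monotonicity in the promised utility
    intro p hp w₁ w₂ hm h12 hM
    have h1 : ((p, w₁) : ℝ × ℝ) ∈ Wset u := ⟨hp, hm, le_trans h12 hM⟩
    have h2 : ((p, w₂) : ℝ × ℝ) ∈ Wset u := ⟨hp, le_trans hm h12, hM⟩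
    rw [← hVfix _ h2, ← hVfix _ h1, bellman_eq, bellman_eq]
    apply csSup_le_csSup (PS_bddAbove (S := S) u v hδ0.le hδ1.le hC _)
      (PS_nonempty (S := S) u v δ hS2 Vstar h2)
    rintro x ⟨f, hf, rfl⟩
    exact ⟨f, ⟨hf.1, hf.2.1, hf.2.2.1, le_trans h12 hf.2.2.2.1,
      hf.2.2.2.2.1, hf.2.2.2.2.2⟩, rfl⟩
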